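/- Let λ ∈ ℝ and ε > 0. The critical points of the polynomial function f(x,y,z) = x³ − xz² + y²z + λz² + εx are exactly the two points (λ, 0, √(3λ² + ε)) and (λ, 0, −√(3λ² + ε)); both are nondegenerate, the Morse index at the point with positive z-coordinate is 1, and the Morse index at the point with negative z-coordinate is 2. -/

import Mathlib

open MvPolynomial Matrix

/-- The Hessian matrix of a polynomial in three real variables at a point. -/
noncomputable def hess3 (f : MvPolynomial (Fin 3) ℝ) (p : Fin 3 → ℝ) :
    Matrix (Fin 3) (Fin 3) ℝ :=
  Matrix.of fun i j => eval p (pderiv i (pderiv j f))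

/-- A point of ℝ³ is a critical point of a polynomial in three variables if all three
partial derivatives vanish there. -/
def IsCriticalPt3 (f : MvPolynomial (Fin 3) ℝ) (p : Fin 3 → ℝ) : Prop :=
  ∀ i, eval p (pderiv i f) = 0

/-- The Morse index at a point: the number of negative eigenvalues (with multiplicity)
of the Hessian matrix there (junk value 0 if the Hessian is not symmetric). -/
noncomputable def morseIndex3 (f : MvPolynomial (Fin 3) ℝ) (p : Fin 3 → ℝ) : ℕ :=
  if h : (hess3 f p).IsHermitian then {i : Fin 3 | h.eigenvalues i < 0}.ncard else 0

/-- The polynomial f(x,y,z) = x³ − xz² + y²z + λz² + εx. -/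
noncomputable def fTwo (lam ε : ℝ) : MvPolynomial (Fin 3) ℝ :=
  X 0 ^ 3 - X 0 * X 2 ^ 2 + X 1 ^ 2 * X 2 + C lam * X 2 ^ 2 + C ε * X 0

private lemma pC3 : (3 : MvPolynomial (Fin 3) ℝ) = C 3 := (map_ofNat C _).symm
private lemma pC2 : (2 : MvPolynomial (Fin 3) ℝ) = C 2 := (map_ofNat C _).symm

private lemma diag_eq_sum {n : ℕ} {A : Matrix (Fin n) (Fin n) ℝ} (hA : A.IsHermitian) (j : Fin n) :
    A j j = ∑ k, hA.eigenvalues k * ((hA.eigenvectorUnitary : Matrix (Fin n) (Fin n) ℝ) j k)^2 := by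
  conv_lhs => rw [hA.spectral_theorem]
  simp [Matrix.mul_apply, Matrix.diagonal_apply, Finset.sum_ite_eq, Finset.mul_sum]
  congr 1; ext k; ring

private lemma diag_nonpos {n : ℕ} {A : Matrix (Fin n) (Fin n) ℝ} (hA : A.IsHermitian)
    (h : ∀ i, hA.eigenvalues i < 0) (j : Fin n) : A j j ≤ 0 := by
  rw [diag_eq_sum hA j]
  exact Finset.sum_nonpos fun k _ => mul_nonpos_of_nonpos_of_nonneg (h k).le (sq_nonneg _)

private lemma diag_nonneg {n : ℕ} {A : Matrix (Fin n) (Fin n) ℝ} (hA : A.IsHermitian)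
    (h : ∀ i, 0 < hA.eigenvalues i) (j : Fin n) : 0 ≤ A j j := by
  rw [diag_eq_sum hA j]
  exact Finset.sum_nonneg fun k _ => mul_nonneg (h k).le (sq_nonneg _)

set_option maxHeartbeats 1000000 in
private lemma hessVal (lam ε t : ℝ) :
    hess3 (fTwo lam ε) ![lam, 0, t] = !![6*lam, 0, -2*t; 0, 2*t, 0; -2*t, 0, 0] := by
  ext i j
  fin_cases i <;> fin_cases j <;>
    (simp [hess3, fTwo, pC3, pC2, Matrix.vecHead, Matrix.vecTail]; try ring)

private lemma hermVal (a b c : ℝ) : (!![a, 0, c; 0, b, 0; c, 0, 0]).IsHermitian := by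
  unfold Matrix.IsHermitian
  ext i j
  fin_cases i <;> fin_cases j <;> simp [Matrix.conjTranspose_apply]

/-- Count = 1 helper -/
private lemma ncard_one_of_signs {e : Fin 3 → ℝ} {i j k : Fin 3}
    (huniv : ({i, j, k} : Set (Fin 3)) = Set.univ)
    (hij : i ≠ j) (hik : i ≠ k) (hjk : j ≠ k)
    (hi : e i < 0) (hj : 0 < e j) (hk : 0 < e k) :
    {x : Fin 3 | e x < 0}.ncard = 1 := by
  have : {x : Fin 3 | e x < 0} = {i} := by
    apply Set.eq_of_subset_of_subset
    · intro x hx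
      have hxu : x ∈ ({i, j, k} : Set (Fin 3)) := by rw [huniv]; trivial
      simp only [Set.mem_insert_iff, Set.mem_singleton_iff] at hxu
      rcases hxu with h | h | h
      · simp [h]
      · simp only [Set.mem_setOf_eq, h] at hx; linarith
      · simp only [Set.mem_setOf_eq, h] at hx; linarith
    · intro x hx; simp only [Set.mem_singleton_iff] at hx; simp [hx, hi]
  rw [this, Set.ncard_singleton]

private lemma ncard_two_of_signs {e : Fin 3 → ℝ} {i j k : Fin 3}
    (huniv : ({i, j, k} : Set (Fin 3)) = Set.univ)
    (hij : i ≠ j) (hik : i ≠ k) (hjk : j ≠ k)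
    (hi : e i < 0) (hj : e j < 0) (hk : 0 < e k) :
    {x : Fin 3 | e x < 0}.ncard = 2 := by
  have : {x : Fin 3 | e x < 0} = {i, j} := by
    apply Set.eq_of_subset_of_subset
    · intro x hx
      have hxu : x ∈ ({i, j, k} : Set (Fin 3)) := by rw [huniv]; trivial
      simp only [Set.mem_insert_iff, Set.mem_singleton_iff] at hxu
      rcases hxu with h | h | h
      · simp [h]
      · simp [h]
      · simp only [Set.mem_setOf_eq, h] at hx; linarith
    · intro x hx
      rcases hx with h | h
      · simp [h, hi]
      · simp only [Set.mem_singleton_iff] at h; simp [h, hj]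
  rw [this, Set.ncard_pair hij]

set_option maxHeartbeats 1000000 in
/-- For λ ∈ ℝ and ε > 0, the critical points of x³ − xz² + y²z + λz² + εx are exactly
(λ, 0, √(3λ²+ε)) and (λ, 0, −√(3λ²+ε)); both are nondegenerate, with Morse index 1 at
the point with positive z-coordinate and Morse index 2 at the other one. -/
theorem critical_points_fTwo (lam ε : ℝ) (hε : 0 < ε) :
    (∀ p : Fin 3 → ℝ, IsCriticalPt3 (fTwo lam ε) p ↔
      p = ![lam, 0, Real.sqrt (3 * lam ^ 2 + ε)] ∨
      p = ![lam, 0, -Real.sqrt (3 * lam ^ 2 + ε)]) ∧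
    (hess3 (fTwo lam ε) ![lam, 0, Real.sqrt (3 * lam ^ 2 + ε)]).det ≠ 0 ∧
    (hess3 (fTwo lam ε) ![lam, 0, -Real.sqrt (3 * lam ^ 2 + ε)]).det ≠ 0 ∧
    morseIndex3 (fTwo lam ε) ![lam, 0, Real.sqrt (3 * lam ^ 2 + ε)] = 1 ∧
    morseIndex3 (fTwo lam ε) ![lam, 0, -Real.sqrt (3 * lam ^ 2 + ε)] = 2 := by
  set s := Real.sqrt (3 * lam ^ 2 + ε) with hs_def
  have hsum_pos : 0 < 3 * lam ^ 2 + ε := by positivity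
  have hs2 : s ^ 2 = 3 * lam ^ 2 + ε := Real.sq_sqrt hsum_pos.le
  have hs0 : 0 < s := Real.sqrt_pos.mpr hsum_pos
  have hcrit : ∀ p : Fin 3 → ℝ, IsCriticalPt3 (fTwo lam ε) p ↔
      p = ![lam, 0, s] ∨ p = ![lam, 0, -s] := by
    intro p
    constructor
    · intro h
      have e0 := h 0; have e1 := h 1; have e2 := h 2
      simp [fTwo, pC3, pC2] at e0 e1 e2
      have hp2 : p 2 ≠ 0 := by intro h0; rw [h0] at e0; nlinarith
      have hp1 : p 1 = 0 := e1.resolve_left hp2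
      have hp0 : p 0 = lam := by
        rw [hp1] at e2
        have : (lam - p 0) * (2 * p 2) = 0 := by ring_nf; ring_nf at e2; linarith
        rcases mul_eq_zero.mp this with h' | h'
        · linarith
        · exact absurd (by linarith) hp2
      have hz : (p 2 - s) * (p 2 + s) = 0 := by
        have hq : p 2 ^ 2 = s ^ 2 := by rw [hs2]; rw [hp0] at e0; linarith
        nlinarith [hq]
      rcases mul_eq_zero.mp hz with h' | h'
      · left; funext i; fin_cases i <;> simp [hp0, hp1] <;> linarith
      · right; funext i; fin_cases i <;> simp [hp0, hp1] <;> linarith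
    · rintro (rfl | rfl) <;>
        (intro i; fin_cases i <;> simp [fTwo, pC3, pC2] <;> nlinarith [hs2])
  have hHp := hessVal lam ε s
  have hHm := hessVal lam ε (-s)
  have hdetp : (hess3 (fTwo lam ε) ![lam, 0, s]).det = -(8 * s ^ 3) := by
    rw [hHp, Matrix.det_fin_three]
    norm_num [Matrix.vecHead, Matrix.vecTail, Matrix.cons_val_two, Matrix.cons_val_one, Matrix.cons_val_zero]
    ring
  have hdetm : (hess3 (fTwo lam ε) ![lam, 0, -s]).det = 8 * s ^ 3 := by
    rw [hHm, Matrix.det_fin_three]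
    norm_num [Matrix.vecHead, Matrix.vecTail, Matrix.cons_val_two, Matrix.cons_val_one, Matrix.cons_val_zero]
    ring
  have hs3 : 0 < s ^ 3 := by positivity
  refine ⟨hcrit, by rw [hdetp]; nlinarith, by rw [hdetm]; nlinarith, ?_, ?_⟩
  · have hherm : (hess3 (fTwo lam ε) ![lam, 0, s]).IsHermitian := by
      rw [hHp]; exact hermVal _ _ _
    rw [morseIndex3, dif_pos hherm]
    set e := hherm.eigenvalues with he
    have hprod : e 0 * e 1 * e 2 = -(8 * s ^ 3) := by
      have := hherm.det_eq_prod_eigenvalues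
      rw [hdetp] at this
      rw [Fin.prod_univ_three] at this
      exact_mod_cast this.symm
    have hnz0 : e 0 ≠ 0 := by intro h; rw [h] at hprod; simp at hprod; nlinarith
    have hnz1 : e 1 ≠ 0 := by intro h; rw [h] at hprod; simp at hprod; nlinarith
    have hnz2 : e 2 ≠ 0 := by intro h; rw [h] at hprod; simp at hprod; nlinarith
    have hne3 : ¬ (∀ i, e i < 0) := by
      intro hneg
      have h11 := diag_nonpos hherm hneg 1
      rw [hHp] at h11
      simp at h11
      linarith
    rcases lt_or_gt_of_ne hnz0 with h0 | h0 <;>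
    rcases lt_or_gt_of_ne hnz1 with h1 | h1 <;>
    rcases lt_or_gt_of_ne hnz2 with h2 | h2
    · exact absurd (fun i => by fin_cases i <;> assumption) hne3
    · exfalso; have := mul_pos (mul_pos_of_neg_of_neg h0 h1) h2; linarith
    · exfalso; have := mul_pos_of_neg_of_neg (mul_neg_of_neg_of_pos h0 h1) h2; linarith
    · have huniv : ({0, 1, 2} : Set (Fin 3)) = Set.univ := by ext x; fin_cases x <;> simp
      exact ncard_one_of_signs huniv (by decide) (by decide) (by decide) h0 h1 h2
    · exfalso; have := mul_pos_of_neg_of_neg (mul_neg_of_pos_of_neg h0 h1) h2; linarith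
    · have huniv : ({1, 0, 2} : Set (Fin 3)) = Set.univ := by ext x; fin_cases x <;> simp
      exact ncard_one_of_signs huniv (by decide) (by decide) (by decide) h1 h0 h2
    · have huniv : ({2, 0, 1} : Set (Fin 3)) = Set.univ := by ext x; fin_cases x <;> simp
      exact ncard_one_of_signs huniv (by decide) (by decide) (by decide) h2 h0 h1
    · exfalso; have := mul_pos (mul_pos h0 h1) h2; linarith
  · have hherm : (hess3 (fTwo lam ε) ![lam, 0, -s]).IsHermitian := by
      rw [hHm]; exact hermVal _ _ _
    rw [morseIndex3, dif_pos hherm]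
    set e := hherm.eigenvalues with he
    have hprod : e 0 * e 1 * e 2 = 8 * s ^ 3 := by
      have := hherm.det_eq_prod_eigenvalues
      rw [hdetm] at this
      rw [Fin.prod_univ_three] at this
      exact_mod_cast this.symm
    have hnz0 : e 0 ≠ 0 := by intro h; rw [h] at hprod; simp at hprod; nlinarith
    have hnz1 : e 1 ≠ 0 := by intro h; rw [h] at hprod; simp at hprod; nlinarith
    have hnz2 : e 2 ≠ 0 := by intro h; rw [h] at hprod; simp at hprod; nlinarith
    have hne0 : ¬ (∀ i, 0 < e i) := by
      intro hpos
      have h11 := diag_nonneg hherm hpos 1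
      rw [hHm] at h11
      simp at h11
      linarith
    rcases lt_or_gt_of_ne hnz0 with h0 | h0 <;>
    rcases lt_or_gt_of_ne hnz1 with h1 | h1 <;>
    rcases lt_or_gt_of_ne hnz2 with h2 | h2
    · exfalso; have := mul_neg_of_pos_of_neg (mul_pos_of_neg_of_neg h0 h1) h2; linarith
    · have huniv : ({0, 1, 2} : Set (Fin 3)) = Set.univ := by ext x; fin_cases x <;> simp
      exact ncard_two_of_signs huniv (by decide) (by decide) (by decide) h0 h1 h2
    · have huniv : ({0, 2, 1} : Set (Fin 3)) = Set.univ := by ext x; fin_cases x <;> simp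
      exact ncard_two_of_signs huniv (by decide) (by decide) (by decide) h0 h2 h1
    · exfalso; have := mul_neg_of_neg_of_pos (mul_neg_of_neg_of_pos h0 h1) h2; linarith
    · have huniv : ({1, 2, 0} : Set (Fin 3)) = Set.univ := by ext x; fin_cases x <;> simp
      exact ncard_two_of_signs huniv (by decide) (by decide) (by decide) h1 h2 h0
    · exfalso; have := mul_neg_of_neg_of_pos (mul_neg_of_pos_of_neg h0 h1) h2; linarith
    · exfalso; have := mul_neg_of_pos_of_neg (mul_pos h0 h1) h2; linarith
    · exact absurd (fun i => by fin_cases i <;> assumption) hne0
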